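/- Let G̃ be an irreducible nonnegative n×n matrix, S ∈ ℝ_{>0}^m (all entries strictly positive), and suppose ρ(G̃·Diag(S)) = 1. Then the set of nonzero nonnegative solutions I of 0 = AI + P·Diag(S)BI forms a one-dimensional positive ray: every such solution equals k·(-A)^{-1}P·Diag(S)·v for some k > 0, where v ≫ 0 is the (up to positive scaling unique) Perron eigenvector of G̃·Diag(S). -/

import Mathlib

open Matrix
open Filter Topology

/-- A matrix is Metzler if its off-diagonal entries are nonnegative. -/
def IsMetzler {n : ℕ} (A : Matrix (Fin n) (Fin n) ℝ) : Prop :=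
  ∀ i j, i ≠ j → 0 ≤ A i j

/-- A matrix is Hurwitz if all its (complex) eigenvalues have negative real part. -/
def IsHurwitz {n : ℕ} (A : Matrix (Fin n) (Fin n) ℝ) : Prop :=
  ∀ μ ∈ spectrum ℂ (A.map (algebraMap ℝ ℂ)), μ.re < 0

/-- The spectral radius of a real matrix. -/
noncomputable def specRad {n : ℕ} (M : Matrix (Fin n) (Fin n) ℝ) : ℝ :=
  sSup {r : ℝ | ∃ μ ∈ spectrum ℂ (M.map (algebraMap ℝ ℂ)), r = ‖μ‖}

/-- A square matrix is irreducible if for every nonempty proper subset `s` of indices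
there is a nonzero entry from `s` to its complement. -/
def MatIrreducible {m : ℕ} (M : Matrix (Fin m) (Fin m) ℝ) : Prop :=
  ∀ s : Set (Fin m), s.Nonempty → s ≠ Set.univ → ∃ i ∈ s, ∃ j ∉ s, M i j ≠ 0


variable {p : ℕ}

/-- complexification as ring hom application -/
noncomputable abbrev cmap (M : Matrix (Fin p) (Fin p) ℝ) : Matrix (Fin p) (Fin p) ℂ :=
  M.map (algebraMap ℝ ℂ)

lemma cmap_pow (M : Matrix (Fin p) (Fin p) ℝ) (k : ℕ) : cmap (M ^ k) = (cmap M) ^ k := by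
  exact map_pow ((algebraMap ℝ ℂ).mapMatrix) M k

lemma mem_spec_iff_det (M : Matrix (Fin p) (Fin p) ℂ) (μ : ℂ) :
    μ ∈ spectrum ℂ M ↔ (Matrix.diagonal (fun _ => μ) - M).det = 0 := by
  rw [spectrum.mem_iff, Matrix.isUnit_iff_isUnit_det, isUnit_iff_ne_zero, not_not,
    Matrix.algebraMap_eq_diagonal]
  rfl

attribute [local instance] Matrix.linftyOpNormedRing Matrix.linftyOpNormedAlgebra

example : CompleteSpace (Matrix (Fin p) (Fin p) ℂ) := by infer_instance

lemma cpow_tendsto_zero (Y : Matrix (Fin p) (Fin p) ℂ)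
    (h : ∀ μ ∈ spectrum ℂ Y, ‖μ‖ < 1) :
    Tendsto (fun k : ℕ => Y ^ k) atTop (𝓝 0) := by
  rcases Nat.eq_zero_or_pos p with hp | hp
  · subst hp
    have h0 : ∀ k : ℕ, Y ^ k = 0 := fun k => Subsingleton.elim _ _
    simpa [h0] using (tendsto_const_nhds : Tendsto (fun _ : ℕ => (0 : Matrix (Fin 0) (Fin 0) ℂ)) atTop _)
  · have : Nontrivial (Matrix (Fin p) (Fin p) ℂ) := by
      haveI : Nonempty (Fin p) := ⟨⟨0, hp⟩⟩
      infer_instance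
    have hρ : spectralRadius ℂ Y < 1 := by
      have := spectrum.spectralRadius_lt_of_forall_lt Y (r := 1)
        (fun z hz => by
          have : ‖z‖ < 1 := by simpa using h z hz
          exact_mod_cast this)
      simpa using this
    obtain ⟨r, hr1, hr2⟩ := ENNReal.lt_iff_exists_nnreal_btwn.mp hρ
    have hr2' : (r : ℝ) < 1 := by exact_mod_cast hr2
    have hgel := spectrum.pow_nnnorm_pow_one_div_tendsto_nhds_spectralRadius Y
    have hev : ∀ᶠ k : ℕ in atTop, (‖Y ^ k‖₊ : ENNReal) ^ (1 / (k : ℝ)) < (r : ENNReal) :=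
      hgel.eventually_lt_const hr1
    refine tendsto_zero_iff_norm_tendsto_zero.mpr ?_
    have hsq : ∀ᶠ k : ℕ in atTop, ‖Y ^ k‖ ≤ (r : ℝ) ^ k := by
      filter_upwards [hev, eventually_ge_atTop 1] with k hk hk1
      have hkpos : (0 : ℝ) < (k : ℝ) := by exact_mod_cast hk1
      have h2 : ((‖Y ^ k‖₊ : ENNReal) ^ (1 / (k : ℝ))) ^ (k : ℝ) < (r : ENNReal) ^ (k : ℝ) :=
        ENNReal.rpow_lt_rpow hk hkpos
      rw [← ENNReal.rpow_mul, one_div_mul_cancel (ne_of_gt hkpos), ENNReal.rpow_one] at h2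
      rw [ENNReal.rpow_natCast, ← ENNReal.coe_pow, ENNReal.coe_lt_coe] at h2
      have : ‖Y ^ k‖₊ ≤ r ^ k := le_of_lt h2
      calc ‖Y ^ k‖ = ((‖Y ^ k‖₊ : ℝ)) := rfl
        _ ≤ ((r ^ k : NNReal) : ℝ) := by exact_mod_cast this
        _ = (r : ℝ) ^ k := by push_cast; ring
    exact squeeze_zero' (Eventually.of_forall fun k => norm_nonneg _) hsq
      (tendsto_pow_atTop_nhds_zero_of_lt_one r.2 hr2')

lemma entry_tendsto_zero (X : Matrix (Fin p) (Fin p) ℝ)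
    (h : ∀ μ ∈ spectrum ℂ (cmap X), ‖μ‖ < 1) (i j : Fin p) :
    Tendsto (fun k : ℕ => (X ^ k) i j) atTop (𝓝 0) := by
  have hY := cpow_tendsto_zero (cmap X) h
  have hYij : Tendsto (fun k : ℕ => ((cmap X) ^ k) i j) atTop (𝓝 0) := by
    have : Continuous fun M : Matrix (Fin p) (Fin p) ℂ => M i j := by
      exact (continuous_apply j).comp (continuous_apply i)
    simpa [Function.comp_def] using (this.tendsto 0).comp hY
  have hre : Tendsto (fun k : ℕ => (((cmap X) ^ k) i j).re) atTop (𝓝 0) := by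
    simpa [Function.comp_def] using (Complex.continuous_re.tendsto 0).comp hYij
  convert hre using 2 with k
  rw [← cmap_pow]
  simp [cmap, Matrix.map_apply]

lemma mulVec_entry_tendsto_zero (X : Matrix (Fin p) (Fin p) ℝ)
    (h : ∀ μ ∈ spectrum ℂ (cmap X), ‖μ‖ < 1) (w : Fin p → ℝ) (i : Fin p) :
    Tendsto (fun k : ℕ => ((X ^ k).mulVec w) i) atTop (𝓝 0) := by
  have : ∀ k : ℕ, ((X ^ k).mulVec w) i = ∑ j, (X ^ k) i j * w j := fun k => rfl
  simp only [this]
  have := tendsto_finset_sum (Finset.univ : Finset (Fin p))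
    (fun j _ => (entry_tendsto_zero X h i j).mul_const (w j))
  simpa using this

lemma cmap_smul (c : ℝ) (R : Matrix (Fin p) (Fin p) ℝ) :
    cmap (c • R) = (c : ℂ) • cmap R := by
  ext i j
  simp [cmap, Matrix.map_apply, Complex.ofReal_mul]

lemma cmap_add (R T : Matrix (Fin p) (Fin p) ℝ) : cmap (R + T) = cmap R + cmap T := by
  ext i j; simp [cmap, Matrix.map_apply]

lemma cmap_one : cmap (1 : Matrix (Fin p) (Fin p) ℝ) = 1 := by
  simpa using map_one ((algebraMap ℝ ℂ).mapMatrix)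

lemma mem_spec_smul {c : ℝ} (hc : c ≠ 0) (R : Matrix (Fin p) (Fin p) ℝ) (ν : ℂ) :
    ν ∈ spectrum ℂ (cmap (c • R)) ↔ ((c : ℂ)⁻¹ * ν) ∈ spectrum ℂ (cmap R) := by
  rw [cmap_smul]
  have hcc : (c : ℂ) ≠ 0 := by exact_mod_cast hc
  rw [show (c : ℂ) • cmap R = (Units.mk0 (c:ℂ) hcc : ℂˣ) • cmap R from rfl,
    spectrum.unit_smul_eq_smul, Set.mem_smul_set_iff_inv_smul_mem]
  simp [Units.smul_def, smul_eq_mul]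

lemma det_ne_zero_of_hurwitz {q : ℕ} (A : Matrix (Fin q) (Fin q) ℝ) (hH : IsHurwitz A) :
    A.det ≠ 0 := by
  intro h0
  have hdetC : (cmap A).det = 0 := by
    have : (cmap A).det = algebraMap ℝ ℂ A.det := by
      rw [show cmap A = (algebraMap ℝ ℂ).mapMatrix A from rfl, RingHom.map_det]
    rw [this, h0, map_zero]
  have h0spec : (0 : ℂ) ∈ spectrum ℂ (cmap A) := by
    rw [mem_spec_iff_det]
    simp [Matrix.det_neg, hdetC]
  have := hH 0 h0spec
  simp at this

lemma neg_inv_nonneg {q : ℕ} (A : Matrix (Fin q) (Fin q) ℝ)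
    (hM : IsMetzler A) (hH : IsHurwitz A) : ∀ i j, 0 ≤ (-A)⁻¹ i j := by
  rcases Nat.eq_zero_or_pos q with hq | hq
  · subst hq; exact fun i => absurd i.2 (by omega)
  haveI : Nonempty (Fin q) := ⟨⟨0, hq⟩⟩
  set F := (Matrix.finite_spectrum (cmap A)).toFinset with hF
  set d : ℝ := Finset.univ.sup' Finset.univ_nonempty (fun i => -A i i) with hd
  set cnat : ℕ := F.sup (fun μ => ⌈(‖μ‖)^2 / (2 * (-μ.re))⌉₊) with hcnat
  set c : ℝ := 1 + max 0 d + cnat with hc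
  have hc0 : 0 < c := by positivity
  have hcd : ∀ i, 0 ≤ A i i + c := by
    intro i
    have h1 : -A i i ≤ d := Finset.le_sup' (fun i => -A i i) (Finset.mem_univ i)
    have : -A i i ≤ max 0 d := le_trans h1 (le_max_right _ _)
    have hn : (0:ℝ) ≤ cnat := Nat.cast_nonneg _
    simp only [hc]; linarith
  have hspec : ∀ μ ∈ spectrum ℂ (cmap A), ‖μ + c‖ < c := by
    intro μ hμ
    have hre : μ.re < 0 := hH μ hμ
    have hμF : μ ∈ F := (Matrix.finite_spectrum (cmap A)).mem_toFinset.mpr hμ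
    have hval : (‖μ‖)^2 / (2 * (-μ.re)) < c := by
      have h1 : (‖μ‖)^2 / (2 * (-μ.re)) ≤ (⌈(‖μ‖)^2 / (2 * (-μ.re))⌉₊ : ℝ) :=
        Nat.le_ceil _
      have h2 : (⌈(‖μ‖)^2 / (2 * (-μ.re))⌉₊ : ℝ) ≤ (cnat : ℝ) := by
        have := Finset.le_sup (f := fun μ => ⌈(‖μ‖)^2 / (2 * (-μ.re))⌉₊) hμF
        exact_mod_cast this
      have h3 : (0:ℝ) ≤ max 0 d := le_max_left _ _
      simp only [hc]; linarith
    have habs2 : (‖μ + c‖)^2 = c^2 + 2*c*μ.re + (‖μ‖)^2 := by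
      rw [Complex.sq_norm, Complex.sq_norm]
      simp [Complex.normSq_apply]
      ring
    have hlt : (‖μ + c‖)^2 < c^2 := by
      have hpos : 0 < 2 * (-μ.re) := by linarith
      have := (div_lt_iff₀ hpos).mp hval
      rw [habs2]; nlinarith
    have := lt_of_pow_lt_pow_left₀ 2 (le_of_lt hc0) hlt
    exact this
  set N : Matrix (Fin q) (Fin q) ℝ := A + c • 1 with hN
  have hN0 : ∀ i j, 0 ≤ N i j := by
    intro i j
    by_cases hij : i = j
    · subst hij; simpa [hN, Matrix.one_apply] using hcd i
    · simpa [hN, Matrix.one_apply, hij] using hM i j hij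
  set X : Matrix (Fin q) (Fin q) ℝ := c⁻¹ • N with hX
  have hX0 : ∀ i j, 0 ≤ X i j := fun i j => by
    have := hN0 i j
    simp only [hX, Matrix.smul_apply, smul_eq_mul]
    positivity
  have hXspec : ∀ ν ∈ spectrum ℂ (cmap X), ‖ν‖ < 1 := by
    intro ν hν
    rw [mem_spec_smul (inv_ne_zero (ne_of_gt hc0)) N ν] at hν
    have hcast : (((c:ℝ)⁻¹ : ℝ) : ℂ)⁻¹ = (c : ℂ) := by push_cast; simp
    rw [hcast] at hν
    -- hν : (c:ℂ) * ν ∈ spectrum ℂ (cmap N)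
    have hcmapN : cmap N = algebraMap ℂ (Matrix (Fin q) (Fin q) ℂ) (c : ℂ) + cmap A := by
      rw [hN, cmap_add, cmap_smul, cmap_one, Algebra.algebraMap_eq_smul_one, add_comm]
    rw [hcmapN, ← spectrum.singleton_add_eq, Set.mem_add] at hν
    obtain ⟨r, hr, μ, hμ, hsum⟩ := hν
    rw [Set.mem_singleton_iff] at hr
    subst hr
    have := hspec μ hμ
    rw [add_comm, hsum] at this
    have hcabs : ‖(c:ℂ) * ν‖ = c * ‖ν‖ := by
      rw [norm_mul]
      simp [abs_of_pos hc0]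
    rw [hcabs] at this
    by_contra hcon
    push_neg at hcon
    nlinarith [norm_nonneg ν]
  -- invertibility of 1 - X
  have h1X : (1 : Matrix (Fin q) (Fin q) ℝ) - X = (-(c⁻¹)) • A := by
    rw [hX, hN, smul_add, smul_smul, inv_mul_cancel₀ (ne_of_gt hc0), one_smul, neg_smul]
    abel
  have hdet1X : ((1 : Matrix (Fin q) (Fin q) ℝ) - X).det ≠ 0 := by
    rw [h1X, Matrix.det_smul]
    exact mul_ne_zero (pow_ne_zero _ (by simp [ne_of_gt hc0]))
      (det_ne_zero_of_hurwitz A hH)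
  have hunit : IsUnit ((1 : Matrix (Fin q) (Fin q) ℝ) - X).det := isUnit_iff_ne_zero.mpr hdet1X
  -- powers of X are nonneg
  have hXk0 : ∀ (k : ℕ) i j, 0 ≤ (X ^ k) i j := by
    intro k
    induction k with
    | zero => intro i j; by_cases hij : i = j <;> simp [Matrix.one_apply, hij]
    | succ k ih =>
      intro i j
      rw [pow_succ, Matrix.mul_apply]
      exact Finset.sum_nonneg fun l _ => mul_nonneg (ih i l) (hX0 l j)
  -- geometric series
  have hgeom : ∀ K : ℕ, (∑ k ∈ Finset.range K, X ^ k) = (1 - X ^ K) * (1 - X)⁻¹ := by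
    intro K
    have h1 : (∑ k ∈ Finset.range K, X ^ k) * (X - 1) = X ^ K - 1 := geom_sum_mul X K
    have h2 : (∑ k ∈ Finset.range K, X ^ k) * (1 - X) = 1 - X ^ K := by
      calc (∑ k ∈ Finset.range K, X ^ k) * (1 - X)
          = -((∑ k ∈ Finset.range K, X ^ k) * (X - 1)) := by noncomm_ring
        _ = 1 - X ^ K := by rw [h1]; noncomm_ring
    calc (∑ k ∈ Finset.range K, X ^ k)
        = (∑ k ∈ Finset.range K, X ^ k) * ((1 - X) * (1 - X)⁻¹) := by
          rw [Matrix.mul_nonsing_inv _ hunit, mul_one]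
      _ = ((∑ k ∈ Finset.range K, X ^ k) * (1 - X)) * (1 - X)⁻¹ := by rw [mul_assoc]
      _ = (1 - X ^ K) * (1 - X)⁻¹ := by rw [h2]
  -- entries of (1 - X)⁻¹ are nonneg
  have hinv0 : ∀ i j, 0 ≤ (1 - X)⁻¹ i j := by
    intro i j
    have hSnn : ∀ K : ℕ, 0 ≤ (∑ k ∈ Finset.range K, X ^ k) i j := by
      intro K
      rw [Matrix.sum_apply]
      exact Finset.sum_nonneg fun k _ => hXk0 k i j
    have htend : Tendsto (fun K : ℕ => (∑ k ∈ Finset.range K, X ^ k) i j) atTop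
        (𝓝 ((1 - X)⁻¹ i j)) := by
      have heq : ∀ K : ℕ, (∑ k ∈ Finset.range K, X ^ k) i j
          = ∑ l, ((1 : Matrix (Fin q) (Fin q) ℝ) i l - (X ^ K) i l) * (1 - X)⁻¹ l j := by
        intro K
        rw [hgeom K]
        simp [Matrix.mul_apply, Matrix.sub_apply]
      simp only [heq]
      have hlim : Tendsto (fun K : ℕ => ∑ l, ((1 : Matrix (Fin q) (Fin q) ℝ) i l - (X ^ K) i l) * (1 - X)⁻¹ l j)
          atTop (𝓝 (∑ l, ((1 : Matrix (Fin q) (Fin q) ℝ) i l - 0) * (1 - X)⁻¹ l j)) := by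
        refine tendsto_finset_sum _ fun l _ => ?_
        exact (((tendsto_const_nhds).sub (entry_tendsto_zero X hXspec i l)).mul_const _)
      convert hlim using 2
      have : ∑ l, ((1 : Matrix (Fin q) (Fin q) ℝ) i l - 0) * (1 - X)⁻¹ l j
          = ((1 : Matrix (Fin q) (Fin q) ℝ) * (1 - X)⁻¹) i j := by
        simp [Matrix.mul_apply]
      rw [this, Matrix.one_mul]
    exact ge_of_tendsto htend (Eventually.of_forall hSnn)
  -- conclude
  have hnegA : -A = c • (1 - X) := by
    rw [h1X, smul_smul, mul_neg, mul_inv_cancel₀ (ne_of_gt hc0)]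
    simp
  have hinvA : (-A)⁻¹ = c⁻¹ • (1 - X)⁻¹ := by
    refine (Matrix.inv_eq_left_inv ?_)
    rw [hnegA, Matrix.smul_mul, Matrix.mul_smul, smul_smul, inv_mul_cancel₀ (ne_of_gt hc0),
      one_smul, Matrix.nonsing_inv_mul _ hunit]
  intro i j
  rw [hinvA]
  simp only [Matrix.smul_apply, smul_eq_mul]
  exact mul_nonneg (by positivity) (hinv0 i j)

section Perron
variable {m : ℕ} (M : Matrix (Fin m) (Fin m) ℝ)

lemma mulVec_nonneg (hM0 : ∀ i j, 0 ≤ M i j) {x : Fin m → ℝ} (hx : ∀ i, 0 ≤ x i) :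
    ∀ i, 0 ≤ M.mulVec x i := fun i => by
  rw [Matrix.mulVec, dotProduct]
  exact Finset.sum_nonneg fun j _ => mul_nonneg (hM0 i j) (hx j)

lemma mulVec_mono (hM0 : ∀ i j, 0 ≤ M i j) {x y : Fin m → ℝ} (hxy : ∀ i, x i ≤ y i) :
    ∀ i, M.mulVec x i ≤ M.mulVec y i := fun i => by
  rw [Matrix.mulVec, Matrix.mulVec, dotProduct, dotProduct]
  exact Finset.sum_le_sum fun j _ => mul_le_mul_of_nonneg_left (hxy j) (hM0 i j)

lemma pow_entries_nonneg (hM0 : ∀ i j, 0 ≤ M i j) (k : ℕ) :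
    ∀ i j, 0 ≤ (M ^ k) i j := by
  induction k with
  | zero => intro i j; by_cases hij : i = j <;> simp [Matrix.one_apply, hij]
  | succ k ih =>
    intro i j
    rw [pow_succ, Matrix.mul_apply]
    exact Finset.sum_nonneg fun l _ => mul_nonneg (ih i l) (hM0 l j)

lemma one_add_entries_nonneg (hM0 : ∀ i j, 0 ≤ M i j) :
    ∀ i j, 0 ≤ (1 + M) i j := by
  intro i j
  by_cases hij : i = j
  · subst hij
    simp only [Matrix.add_apply, Matrix.one_apply_eq]
    have := hM0 i i; linarith
  · simp [Matrix.add_apply, Matrix.one_apply, hij, hM0 i j]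

/-- support of a vector -/
noncomputable def vsupp (x : Fin m → ℝ) : Finset (Fin m) := Finset.univ.filter (fun i => x i ≠ 0)

lemma support_step (hM0 : ∀ i j, 0 ≤ M i j) (hirr : MatIrreducible M)
    {x : Fin m → ℝ} (hx0 : ∀ i, 0 ≤ x i) (hxne : x ≠ 0) :
    (∀ i, 0 ≤ ((1 + M).mulVec x) i) ∧ vsupp x ⊆ vsupp ((1 + M).mulVec x) ∧
      (vsupp x ≠ Finset.univ → vsupp x ⊂ vsupp ((1 + M).mulVec x)) := by
  have hy : ∀ i, ((1 + M).mulVec x) i = x i + M.mulVec x i := by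
    intro i; rw [Matrix.add_mulVec, Matrix.one_mulVec]; rfl
  have hy0 : ∀ i, 0 ≤ ((1 + M).mulVec x) i := by
    intro i; rw [hy]; exact add_nonneg (hx0 i) (mulVec_nonneg M hM0 hx0 i)
  have hsub : vsupp x ⊆ vsupp ((1 + M).mulVec x) := by
    intro i hi
    simp only [vsupp, Finset.mem_filter, Finset.mem_univ, true_and] at hi ⊢
    have hxi : 0 < x i := lt_of_le_of_ne (hx0 i) (Ne.symm hi)
    have : 0 < ((1 + M).mulVec x) i := by
      rw [hy]; have := mulVec_nonneg M hM0 hx0 i; linarith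
    exact ne_of_gt this
  refine ⟨hy0, hsub, fun hne => ?_⟩
  -- strict growth
  obtain ⟨i, hi, j, hj, hij⟩ := hirr ((vsupp x : Set (Fin m)))ᶜ
    (by
      rw [Set.nonempty_compl]
      intro h
      apply hne
      ext a; simp only [Finset.mem_univ, iff_true]
      have : a ∈ (vsupp x : Set (Fin m)) := by rw [h]; trivial
      exact_mod_cast this)
    (by
      intro h
      obtain ⟨a, ha⟩ : ∃ a, x a ≠ 0 := by
        by_contra hc; push_neg at hc; exact hxne (funext hc)
      have haa : a ∈ (vsupp x : Set (Fin m)) := by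
        simp [vsupp, ha]
      have : a ∈ ((vsupp x : Set (Fin m)))ᶜ := by rw [h]; trivial
      exact this haa)
  simp only [Set.mem_compl_iff, not_not] at hi hj
  -- i ∉ supp x, j ∈ supp x, M i j ≠ 0
  have hjmem : j ∈ vsupp x := by exact_mod_cast hj
  have himem : i ∉ vsupp x := fun h => hi (by exact_mod_cast h)
  have hxj : 0 < x j := by
    simp only [vsupp, Finset.mem_filter] at hjmem
    exact lt_of_le_of_ne (hx0 j) (Ne.symm hjmem.2)
  have hMij : 0 < M i j := lt_of_le_of_ne (hM0 i j) (Ne.symm hij)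
  have hyi : 0 < ((1 + M).mulVec x) i := by
    rw [hy]
    have hxi0 : x i = 0 := by
      by_contra hc
      exact himem (by simp [vsupp, hc])
    have hsum : M i j * x j ≤ M.mulVec x i :=
      Finset.single_le_sum (f := fun l => M i l * x l)
        (fun l _ => mul_nonneg (hM0 i l) (hx0 l)) (Finset.mem_univ j)
    have := mul_pos hMij hxj
    linarith
  exact Finset.ssubset_iff_of_subset hsub |>.mpr
    ⟨i, by simp [vsupp, ne_of_gt hyi], himem⟩

lemma supp_card_grow (hM0 : ∀ i j, 0 ≤ M i j) (hirr : MatIrreducible M) :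
    ∀ (k : ℕ) (x : Fin m → ℝ), (∀ i, 0 ≤ x i) → x ≠ 0 →
      min m ((vsupp x).card + k) ≤ (vsupp ((1 + M) ^ k |>.mulVec x)).card := by
  intro k
  induction k with
  | zero =>
    intro x hx0 hxne
    simp only [pow_zero, Matrix.one_mulVec]
    exact le_trans (min_le_right _ _) (by simp)
  | succ k ih =>
    intro x hx0 hxne
    obtain ⟨hy0, hsub, hstrict⟩ := support_step M hM0 hirr hx0 hxne
    set y := (1 + M).mulVec x with hy
    have hxsuppne : (vsupp x).Nonempty := by
      obtain ⟨a, ha⟩ : ∃ a, x a ≠ 0 := by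
        by_contra hc; push_neg at hc; exact hxne (funext hc)
      exact ⟨a, by simp [vsupp, ha]⟩
    have hyne : y ≠ 0 := by
      intro h0
      obtain ⟨a, ha⟩ := hxsuppne
      have := hsub ha
      rw [h0] at this
      simp [vsupp] at this
    have hcomp : ((1 + M) ^ (k + 1)).mulVec x = ((1 + M) ^ k).mulVec y := by
      rw [hy, Matrix.mulVec_mulVec, ← pow_succ]
    rw [hcomp]
    have hIH := ih y hy0 hyne
    by_cases hcase : vsupp x = Finset.univ
    · -- already full support
      have h1 : vsupp y = Finset.univ := by
        apply Finset.eq_univ_iff_forall.mpr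
        intro a
        exact hsub (hcase ▸ Finset.mem_univ a)
      have h2 : (vsupp y).card = m := by rw [h1]; simp
      refine le_trans (min_le_left _ _) ?_
      have h3 : min m ((vsupp y).card + k) = m := by
        rw [h2]; exact min_eq_left (Nat.le_add_right m k)
      exact le_trans (le_of_eq h3.symm) hIH
    · have hcard : (vsupp x).card + 1 ≤ (vsupp y).card :=
        Finset.card_lt_card (hstrict hcase)
      calc min m ((vsupp x).card + (k + 1)) ≤ min m ((vsupp y).card + k) := by
            apply min_le_min (le_refl m); omega
        _ ≤ _ := hIH

lemma pos_of_irr (hM0 : ∀ i j, 0 ≤ M i j) (hirr : MatIrreducible M)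
    {x : Fin m → ℝ} (hx0 : ∀ i, 0 ≤ x i) (hxne : x ≠ 0) :
    ∀ i, 0 < (((1 + M) ^ (m - 1)).mulVec x) i := by
  have hcard := supp_card_grow M hM0 hirr (m - 1) x hx0 hxne
  have hxsuppne : 1 ≤ (vsupp x).card := by
    obtain ⟨a, ha⟩ : ∃ a, x a ≠ 0 := by
      by_contra hc; push_neg at hc; exact hxne (funext hc)
    exact Finset.card_pos.mpr ⟨a, by simp [vsupp, ha]⟩
  have hm : min m ((vsupp x).card + (m - 1)) = m := by omega
  rw [hm] at hcard
  have hfull : vsupp (((1 + M) ^ (m - 1)).mulVec x) = Finset.univ := by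
    have hle : (vsupp (((1 + M) ^ (m - 1)).mulVec x)).card ≤ m := by
      simpa using Finset.card_le_univ (vsupp (((1 + M) ^ (m - 1)).mulVec x))
    apply Finset.eq_univ_of_card
    simp only [Fintype.card_fin]
    omega
  intro i
  have hne : (((1 + M) ^ (m - 1)).mulVec x) i ≠ 0 := by
    have : i ∈ vsupp (((1 + M) ^ (m - 1)).mulVec x) := hfull ▸ Finset.mem_univ i
    simpa [vsupp] using this
  have hnn : 0 ≤ (((1 + M) ^ (m - 1)).mulVec x) i :=
    mulVec_nonneg _ (pow_entries_nonneg _ (one_add_entries_nonneg M hM0) _) hx0 i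
  exact lt_of_le_of_ne hnn (Ne.symm hne)

lemma fixed_point_pos (hM0 : ∀ i j, 0 ≤ M i j) (hirr : MatIrreducible M)
    {x : Fin m → ℝ} (hx0 : ∀ i, 0 ≤ x i) (hxne : x ≠ 0) (hfix : M.mulVec x = x) :
    ∀ i, 0 < x i := by
  have hpow : ∀ k : ℕ, ((1 + M) ^ k).mulVec x = (2 : ℝ) ^ k • x := by
    intro k
    induction k with
    | zero => simp [Matrix.one_mulVec]
    | succ k ih =>
      rw [pow_succ', ← Matrix.mulVec_mulVec, ih, Matrix.mulVec_smul, Matrix.add_mulVec,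
        Matrix.one_mulVec, hfix]
      ext i
      simp only [Pi.smul_apply, Pi.add_apply, smul_eq_mul, pow_succ]
      ring
  intro i
  have := pos_of_irr M hM0 hirr hx0 hxne i
  rw [hpow (m - 1)] at this
  simp only [Pi.smul_apply, smul_eq_mul] at this
  nlinarith [pow_pos (by norm_num : (0:ℝ) < 2) (m - 1), this]

lemma subinvariant_is_fixed (hM0 : ∀ i j, 0 ≤ M i j) (hirr : MatIrreducible M)
    (hb : ∀ μ ∈ spectrum ℂ (cmap M), ‖μ‖ ≤ 1)
    {w : Fin m → ℝ} (hw0 : ∀ i, 0 ≤ w i) (hwne : w ≠ 0)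
    (hsub : ∀ i, w i ≤ M.mulVec w i) : M.mulVec w = w := by
  by_contra hne
  haveI : Nonempty (Fin m) := by
    by_contra h
    exact hwne (funext fun i => absurd (Nonempty.intro i) h)
  set y : Fin m → ℝ := M.mulVec w - w with hy
  have hy0 : ∀ i, 0 ≤ y i := fun i => by simp [hy, hsub i]
  have hyne : y ≠ 0 := by
    intro h0
    apply hne
    have : ∀ i, M.mulVec w i = w i := by
      intro i
      have := congrFun h0 i
      simp [hy] at this
      linarith
    exact funext this
  set Q : Matrix (Fin m) (Fin m) ℝ := (1 + M) ^ (m - 1) with hQ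
  have hQ0 : ∀ i j, 0 ≤ Q i j := pow_entries_nonneg _ (one_add_entries_nonneg M hM0) _
  have hz : ∀ i, 0 < (Q.mulVec y) i := pos_of_irr M hM0 hirr hy0 hyne
  have hw2 : ∀ i, 0 < (Q.mulVec w) i := pos_of_irr M hM0 hirr hw0 hwne
  set z : Fin m → ℝ := Q.mulVec y with hzdef
  set w2 : Fin m → ℝ := Q.mulVec w with hw2def
  have hcomm : M * Q = Q * M := by
    have h1 : Commute M (1 + M) := by
      unfold Commute SemiconjBy
      noncomm_ring
    exact (h1.pow_right (m - 1)).eq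
  have hMw2 : M.mulVec w2 = w2 + z := by
    rw [hw2def, hzdef, Matrix.mulVec_mulVec, hcomm, ← Matrix.mulVec_mulVec, hy,
      Matrix.mulVec_sub]
    ext i
    simp
  set ε : ℝ := Finset.univ.inf' Finset.univ_nonempty (fun i => z i / w2 i) with hε
  have hε0 : 0 < ε := by
    rw [hε]
    apply Finset.lt_inf'_iff .. |>.mpr
    intro i _
    exact div_pos (hz i) (hw2 i)
  have hgrow : ∀ i, (1 + ε) * w2 i ≤ M.mulVec w2 i := by
    intro i
    have h1 : ε ≤ z i / w2 i := Finset.inf'_le _ (Finset.mem_univ i)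
    have h2 : ε * w2 i ≤ z i := by
      rw [div_eq_mul_inv] at h1
      have := mul_le_mul_of_nonneg_right h1 (le_of_lt (hw2 i))
      rwa [mul_assoc, inv_mul_cancel₀ (ne_of_gt (hw2 i)), mul_one] at this
    have h3 : M.mulVec w2 i = w2 i + z i := by rw [hMw2]; rfl
    rw [h3]; nlinarith
  set X : Matrix (Fin m) (Fin m) ℝ := (1 + ε)⁻¹ • M with hX
  have h1ε : (0:ℝ) < 1 + ε := by linarith
  have hX0 : ∀ i j, 0 ≤ X i j := fun i j => by
    simp only [hX, Matrix.smul_apply, smul_eq_mul]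
    exact mul_nonneg (by positivity) (hM0 i j)
  have hXspec : ∀ ν ∈ spectrum ℂ (cmap X), ‖ν‖ < 1 := by
    intro ν hν
    rw [hX, mem_spec_smul (inv_ne_zero (ne_of_gt h1ε)) M ν] at hν
    have hcast : (((1 + ε)⁻¹ : ℝ) : ℂ)⁻¹ = ((1 + ε : ℝ) : ℂ) := by push_cast; simp
    rw [hcast] at hν
    have habs := hb _ hν
    rw [norm_mul] at habs
    have : ‖((1 + ε : ℝ) : ℂ)‖ = 1 + ε := by
      rw [Complex.norm_real, Real.norm_eq_abs, abs_of_pos h1ε]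
    rw [this] at habs
    nlinarith [norm_nonneg ν]
  have hXw2 : ∀ i, w2 i ≤ X.mulVec w2 i := by
    intro i
    have : X.mulVec w2 = (1 + ε)⁻¹ • M.mulVec w2 := by
      rw [hX, Matrix.smul_mulVec]
    rw [this]
    simp only [Pi.smul_apply, smul_eq_mul]
    have h := hgrow i
    have hinv : (0:ℝ) < (1 + ε)⁻¹ := by positivity
    have h2 := mul_le_mul_of_nonneg_left h (le_of_lt hinv)
    rwa [← mul_assoc, inv_mul_cancel₀ (ne_of_gt h1ε), one_mul] at h2
  have hiter : ∀ (k : ℕ) (i : Fin m), w2 i ≤ ((X ^ k).mulVec w2) i := by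
    intro k
    induction k with
    | zero => intro i; simp [Matrix.one_mulVec]
    | succ k ih =>
      intro i
      have hstep : ((X ^ (k+1)).mulVec w2) = ((X ^ k).mulVec (X.mulVec w2)) := by
        rw [pow_succ]
        exact (Matrix.mulVec_mulVec w2 (X ^ k) X).symm
      rw [hstep]
      calc w2 i ≤ ((X ^ k).mulVec w2) i := ih i
        _ ≤ ((X ^ k).mulVec (X.mulVec w2)) i :=
            mulVec_mono _ (pow_entries_nonneg _ hX0 k) hXw2 i
  obtain ⟨i0⟩ := (inferInstance : Nonempty (Fin m))
  have htend := mulVec_entry_tendsto_zero X hXspec w2 i0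
  have : w2 i0 ≤ 0 := ge_of_tendsto htend (Eventually.of_forall fun k => hiter k i0)
  exact absurd this (not_le.mpr (hw2 i0))

lemma exists_eigvec {q : ℕ} (M : Matrix (Fin q) (Fin q) ℂ) {μ : ℂ}
    (hμ : μ ∈ spectrum ℂ M) : ∃ z : Fin q → ℂ, z ≠ 0 ∧ M.mulVec z = μ • z := by
  rw [mem_spec_iff_det] at hμ
  obtain ⟨z, hzne, hz⟩ := (Matrix.exists_mulVec_eq_zero_iff).mpr hμ
  refine ⟨z, hzne, ?_⟩
  have : (Matrix.diagonal (fun _ => μ)).mulVec z - M.mulVec z = 0 := by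
    rw [← Matrix.sub_mulVec]; exact hz
  have hdiag : (Matrix.diagonal (fun _ : Fin q => μ)).mulVec z = μ • z := by
    ext i
    rw [Matrix.mulVec_diagonal]
    simp [smul_eq_mul]
  rw [hdiag] at this
  ext i
  have := congrFun this i
  simp only [Pi.sub_apply, Pi.zero_apply, sub_eq_zero] at this
  exact this.symm

lemma fixed_unique (hM0 : ∀ i j, 0 ≤ M i j) (hirr : MatIrreducible M)
    {v v' : Fin m → ℝ} (hv : ∀ i, 0 < v i) (hfix : M.mulVec v = v)
    (hv'0 : ∀ i, 0 ≤ v' i) (hv'ne : v' ≠ 0) (hfix' : M.mulVec v' = v') :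
    ∃ c : ℝ, 0 < c ∧ v' = c • v := by
  have hv'pos := fixed_point_pos M hM0 hirr hv'0 hv'ne hfix'
  haveI : Nonempty (Fin m) := by
    by_contra h
    exact hv'ne (funext fun i => absurd (Nonempty.intro i) h)
  set c : ℝ := Finset.univ.inf' Finset.univ_nonempty (fun i => v' i / v i) with hc
  obtain ⟨i0, _, hi0⟩ := Finset.exists_mem_eq_inf' Finset.univ_nonempty (fun i => v' i / v i)
  have hc0 : 0 < c := by
    rw [hc]
    apply Finset.lt_inf'_iff .. |>.mpr
    intro i _
    exact div_pos (hv'pos i) (hv i)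
  set u : Fin m → ℝ := v' - c • v with hu
  have hu0 : ∀ i, 0 ≤ u i := by
    intro i
    have h1 : c ≤ v' i / v i := Finset.inf'_le _ (Finset.mem_univ i)
    have h2 : c * v i ≤ v' i := by
      rw [div_eq_mul_inv] at h1
      have := mul_le_mul_of_nonneg_right h1 (le_of_lt (hv i))
      rwa [mul_assoc, inv_mul_cancel₀ (ne_of_gt (hv i)), mul_one] at this
    simp [hu, h2]
  have hufix : M.mulVec u = u := by
    rw [hu, Matrix.mulVec_sub, Matrix.mulVec_smul, hfix, hfix']
  have hui0 : u i0 = 0 := by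
    simp only [hu, Pi.sub_apply, Pi.smul_apply, smul_eq_mul, hc, hi0]
    rw [div_mul_cancel₀ _ (ne_of_gt (hv i0)), sub_self]
  have huzero : u = 0 := by
    by_contra hune
    have := fixed_point_pos M hM0 hirr hu0 hune hufix i0
    rw [hui0] at this
    exact lt_irrefl 0 this
  exact ⟨c, hc0, sub_eq_zero.mp huzero⟩

end Perron

lemma mul_entries_nonneg {a b c : ℕ} (U : Matrix (Fin a) (Fin b) ℝ) (V : Matrix (Fin b) (Fin c) ℝ)
    (hU : ∀ i j, 0 ≤ U i j) (hV : ∀ i j, 0 ≤ V i j) : ∀ i j, 0 ≤ (U * V) i j := by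
  intro i j
  rw [Matrix.mul_apply]
  exact Finset.sum_nonneg fun l _ => mul_nonneg (hU i l) (hV l j)

/-- At threshold (`ρ(G̃ Diag(S)) = 1`, `G̃ := B(-A)⁻¹P` irreducible, `S ≫ 0`), the nonzero
nonnegative solutions of `0 = A I + P Diag(S) B I` form a one-dimensional positive ray
generated by `(-A)⁻¹ P Diag(S) v`, with `v ≫ 0` the Perron eigenvector of `G̃ Diag(S)`. -/
theorem threshold_solutions_form_ray {n m : ℕ}
    (A : Matrix (Fin n) (Fin n) ℝ) (hM : IsMetzler A) (hH : IsHurwitz A)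
    (P : Matrix (Fin n) (Fin m) ℝ) (B : Matrix (Fin m) (Fin n) ℝ)
    (hP : ∀ i j, 0 ≤ P i j) (hB : ∀ i j, 0 ≤ B i j)
    (hirr : MatIrreducible (B * (-A)⁻¹ * P))
    (S : Fin m → ℝ) (hS : ∀ i, 0 < S i)
    (hρ : specRad (B * (-A)⁻¹ * P * Matrix.diagonal S) = 1) :
    ∃ v : Fin m → ℝ, (∀ i, 0 < v i) ∧
      (B * (-A)⁻¹ * P * Matrix.diagonal S).mulVec v = v ∧
      (∀ v' : Fin m → ℝ, (∀ i, 0 ≤ v' i) → v' ≠ 0 →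
        (B * (-A)⁻¹ * P * Matrix.diagonal S).mulVec v' = v' → ∃ c : ℝ, 0 < c ∧ v' = c • v) ∧
      ∀ I : Fin n → ℝ, (∀ i, 0 ≤ I i) → I ≠ 0 →
        0 = A.mulVec I + (P * Matrix.diagonal S * B).mulVec I →
        ∃ k : ℝ, 0 < k ∧ I = k • (-A)⁻¹.mulVec (P.mulVec ((Matrix.diagonal S).mulVec v)) := by
  classical
  have hinv0 : ∀ i j, 0 ≤ (-A)⁻¹ i j := neg_inv_nonneg A hM hH
  have hG0 : ∀ i j, 0 ≤ (B * (-A)⁻¹ * P) i j :=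
    mul_entries_nonneg _ _ (mul_entries_nonneg _ _ hB hinv0) hP
  set G : Matrix (Fin m) (Fin m) ℝ := B * (-A)⁻¹ * P with hG
  set D : Matrix (Fin m) (Fin m) ℝ := Matrix.diagonal S with hD
  have hM0 : ∀ i j, 0 ≤ (G * D) i j := by
    intro i j
    rw [hD, Matrix.mul_diagonal]
    exact mul_nonneg (hG0 i j) (le_of_lt (hS j))
  have hirrM : MatIrreducible (G * D) := by
    intro s hs1 hs2
    obtain ⟨i, hi, j, hj, hij⟩ := hirr s hs1 hs2
    exact ⟨i, hi, j, hj, by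
      rw [hD, Matrix.mul_diagonal]
      exact mul_ne_zero hij (ne_of_gt (hS j))⟩
  -- spectral facts
  set T : Set ℝ := {r : ℝ | ∃ μ ∈ spectrum ℂ (cmap (G * D)), r = ‖μ‖} with hT
  have hTim : T = (fun μ => ‖μ‖) '' (spectrum ℂ (cmap (G * D))) := by
    ext r
    simp only [hT, Set.mem_setOf_eq, Set.mem_image]
    constructor
    · rintro ⟨μ, hμ, rfl⟩; exact ⟨μ, hμ, rfl⟩
    · rintro ⟨μ, hμ, rfl⟩; exact ⟨μ, hμ, rfl⟩
  have hTfin : T.Finite := by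
    rw [hTim]; exact (Matrix.finite_spectrum _).image _
  have hρ' : sSup T = 1 := hρ
  have hTne : T.Nonempty := by
    by_contra h
    rw [Set.not_nonempty_iff_eq_empty] at h
    rw [h, Real.sSup_empty] at hρ'
    norm_num at hρ'
  have hmem : (1:ℝ) ∈ T := hρ' ▸ hTne.csSup_mem hTfin
  obtain ⟨μ0, hμ0, habs1⟩ := hmem
  have hb : ∀ μ ∈ spectrum ℂ (cmap (G * D)), ‖μ‖ ≤ 1 :=
    fun μ hμ => hρ' ▸ le_csSup hTfin.bddAbove ⟨μ, hμ, rfl⟩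
  obtain ⟨z, hzne, hz⟩ := exists_eigvec (cmap (G * D)) hμ0
  set w : Fin m → ℝ := fun i => ‖z i‖ with hw
  have hw0 : ∀ i, 0 ≤ w i := fun i => norm_nonneg _
  have hwne : w ≠ 0 := by
    intro h
    apply hzne
    ext i
    have := congrFun h i
    simpa [hw] using this
  have hwsub : ∀ i, w i ≤ (G * D).mulVec w i := by
    intro i
    have h1 : w i = ‖(cmap (G * D)).mulVec z i‖ := by
      rw [hz]
      simp only [Pi.smul_apply, smul_eq_mul, norm_mul, ← habs1, one_mul]
      rfl
    have h2 : (cmap (G * D)).mulVec z i = ∑ j, ((G * D) i j : ℂ) * z j := by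
      rw [Matrix.mulVec, dotProduct]
      congr 1
    have h3 : ‖∑ j, ((G * D) i j : ℂ) * z j‖ ≤ ∑ j, (G * D) i j * w j := by
      refine le_trans (norm_sum_le _ _) (le_of_eq ?_)
      refine Finset.sum_congr rfl fun j _ => ?_
      rw [norm_mul, Complex.norm_real, Real.norm_eq_abs, abs_of_nonneg (hM0 i j)]
    have h4 : (G * D).mulVec w i = ∑ j, (G * D) i j * w j := rfl
    rw [h1, h2, h4]
    exact h3
  have hfix := subinvariant_is_fixed (G * D) hM0 hirrM hb hw0 hwne hwsub
  have hwpos := fixed_point_pos (G * D) hM0 hirrM hw0 hwne hfix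
  refine ⟨w, hwpos, hfix,
    fun v' h0 hne hf => fixed_unique (G * D) hM0 hirrM hwpos hfix h0 hne hf, ?_⟩
  intro I hI0 hIne heq
  have hdetA : A.det ≠ 0 := det_ne_zero_of_hurwitz A hH
  have hdetnA : (-A).det ≠ 0 := by
    rw [Matrix.det_neg]
    exact mul_ne_zero (pow_ne_zero _ (by norm_num)) hdetA
  have hunit : IsUnit (-A).det := isUnit_iff_ne_zero.mpr hdetnA
  have hAI : (-A).mulVec I = (P * D * B).mulVec I := by
    ext i
    have := congrFun heq i
    simp only [Pi.add_apply, Pi.zero_apply] at this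
    rw [Matrix.neg_mulVec]
    simp only [Pi.neg_apply]
    linarith
  have hI' : I = (-A)⁻¹.mulVec ((P * D * B).mulVec I) := by
    rw [← hAI, Matrix.mulVec_mulVec, Matrix.nonsing_inv_mul _ hunit, Matrix.one_mulVec]
  set u : Fin m → ℝ := B.mulVec I with hu
  have hu0 : ∀ i, 0 ≤ u i := by
    intro i
    rw [hu, Matrix.mulVec, dotProduct]
    exact Finset.sum_nonneg fun j _ => mul_nonneg (hB i j) (hI0 j)
  have hPDu : (P * D * B).mulVec I = (P * D).mulVec u := by
    rw [hu, Matrix.mulVec_mulVec]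
  have hune : u ≠ 0 := by
    intro h0
    apply hIne
    rw [hI', hPDu, h0, Matrix.mulVec_zero, Matrix.mulVec_zero]
  have hMu : (G * D).mulVec u = u := by
    conv_rhs => rw [hu, hI']
    rw [hu, Matrix.mulVec_mulVec, Matrix.mulVec_mulVec, Matrix.mulVec_mulVec]
    congr 1
    rw [hG]
    simp only [Matrix.mul_assoc]
  obtain ⟨c, hc0, hcu⟩ := fixed_unique (G * D) hM0 hirrM hwpos hfix hu0 hune hMu
  refine ⟨c, hc0, ?_⟩
  rw [hI', hPDu, hcu, Matrix.mulVec_smul, Matrix.mulVec_smul]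
  congr 1
  rw [← Matrix.mulVec_mulVec]
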